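/- Let Aff(F_5) = ⟨(1 2 3 4 5), (2 3 5 4)⟩ ≤ Perm (Fin 5). Suppose a_1, b_1, …, a_g, b_g, c_1, …, c_n are elements of Aff(F_5) such that each c_j has cycle type {5} or {2,2}, and the number of j with cycle type of c_j equal to {2,2} is odd. Then (∏_{i=1}^g [a_i,b_i]) · (∏_{j=1}^n c_j) ≠ 1. (This is the obstruction, used in Theorem 3.9(6b), showing that a 5-fold covering with an odd number of [2,2,1] branch values and all other branch values of type [5] cannot have monodromy group conjugate to D_5 or Aff(F_5).) -/

import Mathlib

open Equiv
open scoped commutatorElement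

instance : Fact (Nat.Prime 5) := ⟨by norm_num⟩

/-- The affine subgroup `Aff(F₅) = ⟨(1 2 3 4 5), (2 3 5 4)⟩` of `Perm (Fin 5)`. -/
def Aff5 : Subgroup (Equiv.Perm (Fin 5)) :=
  Subgroup.closure {c[0, 1, 2, 3, 4], c[1, 2, 4, 3]}

def IsAff (σ : Perm (Fin 5)) : Prop :=
  ∃ m b : ZMod 5, m ≠ 0 ∧ ∀ x : ZMod 5, σ x = m * x + b

def mult (σ : Perm (Fin 5)) : ZMod 5 := σ (1 : ZMod 5) - σ (0 : ZMod 5)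

lemma isAff_mul {σ τ : Perm (Fin 5)} {m b m' b' : ZMod 5}
    (hf : ∀ x : ZMod 5, σ x = m * x + b) (hf' : ∀ x : ZMod 5, τ x = m' * x + b') :
    ∀ x : ZMod 5, (σ * τ) x = (m * m') * x + (m * b' + b) := fun z => by
  show σ (τ z) = _
  rw [hf' z, hf]; change (m * (m' * z + b') + b : ZMod 5) = _; ring

lemma isAff_of_mem : ∀ σ ∈ Aff5, IsAff σ := by
  intro σ h
  induction h using Subgroup.closure_induction with
  | mem x hx =>
    rcases hx with h | h <;> subst h
    · exact ⟨1, 1, by decide, by intro x; fin_cases x <;> rfl⟩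
    · exact ⟨2, 0, by decide, by intro x; fin_cases x <;> rfl⟩
  | one => exact ⟨1, 0, by decide, by intro x; simp; rfl⟩
  | mul x y _ _ hx hy =>
    obtain ⟨m, b, hm, hf⟩ := hx
    obtain ⟨m', b', hm', hf'⟩ := hy
    exact ⟨m * m', m * b' + b, mul_ne_zero hm hm', isAff_mul hf hf'⟩
  | inv x _ hx =>
    obtain ⟨m, b, hm, hf⟩ := hx
    refine ⟨m⁻¹, -(m⁻¹ * b), inv_ne_zero hm, fun z => ?_⟩
    have : x (m⁻¹ * z + -(m⁻¹ * b)) = z := by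
      rw [hf]; field_simp
      change (z + -b + b : ZMod 5) = z; ring
    calc x⁻¹ z = x⁻¹ (x (m⁻¹ * z + -(m⁻¹ * b))) := by rw [this]
    _ = _ := by exact x.symm_apply_apply _

lemma mult_eq {σ : Perm (Fin 5)} {m b : ZMod 5} (hf : ∀ x : ZMod 5, σ x = m * x + b) :
    mult σ = m := by
  unfold mult; rw [hf, hf]; change (m * 1 + b : ZMod 5) - (m * 0 + b) = m; ring

lemma mult_mul' {σ τ : Perm (Fin 5)} (hσ : σ ∈ Aff5) (hτ : τ ∈ Aff5) :
    mult (σ * τ) = mult σ * mult τ := by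
  obtain ⟨m, b, hm, hf⟩ := isAff_of_mem σ hσ
  obtain ⟨m', b', hm', hf'⟩ := isAff_of_mem τ hτ
  rw [mult_eq hf, mult_eq hf', mult_eq (isAff_mul hf hf')]

lemma mult_one : mult 1 = 1 := by decide

lemma mult_inv_cancel {σ : Perm (Fin 5)} (hσ : σ ∈ Aff5) : mult σ * mult σ⁻¹ = 1 := by
  rw [← mult_mul' hσ (inv_mem hσ), mul_inv_cancel, mult_one]

lemma mult_comm_eq_one {σ τ : Perm (Fin 5)} (hσ : σ ∈ Aff5) (hτ : τ ∈ Aff5) :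
    mult ⁅σ, τ⁆ = 1 := by
  have h1 := mult_inv_cancel hσ
  have h2 := mult_inv_cancel hτ
  show mult (σ * τ * σ⁻¹ * τ⁻¹) = 1
  rw [mult_mul' (mul_mem (mul_mem hσ hτ) (inv_mem hσ)) (inv_mem hτ),
    mult_mul' (mul_mem hσ hτ) (inv_mem hσ), mult_mul' hσ hτ]
  calc mult σ * mult τ * mult σ⁻¹ * mult τ⁻¹
      = (mult σ * mult σ⁻¹) * (mult τ * mult τ⁻¹) := by ring
    _ = 1 := by rw [h1, h2, one_mul]

lemma mult_of_five {σ : Perm (Fin 5)} (hσ : σ ∈ Aff5) (h5 : σ.cycleType = {5}) :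
    mult σ = 1 := by
  obtain ⟨m, b, hm, hf⟩ := isAff_of_mem σ hσ
  rw [mult_eq hf]
  by_contra hm1
  have hsupp : σ.support.card = 5 := by rw [← Perm.sum_cycleType, h5]; rfl
  have huniv : σ.support = Finset.univ := Finset.eq_univ_of_card _ hsupp
  have hfix : σ ((1 - m)⁻¹ * b) = (1 - m)⁻¹ * b := by
    rw [hf]
    have h1m : (1 : ZMod 5) - m ≠ 0 := sub_ne_zero.mpr (Ne.symm hm1)
    field_simp
    ring
  have := Perm.mem_support.mp (huniv ▸ Finset.mem_univ ((1 - m)⁻¹ * b : ZMod 5))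
  exact this hfix

lemma mult_of_22 {σ : Perm (Fin 5)} (hσ : σ ∈ Aff5) (h22 : σ.cycleType = {2, 2}) :
    mult σ = -1 := by
  obtain ⟨m, b, hm, hf⟩ := isAff_of_mem σ hσ
  rw [mult_eq hf]
  have hord : orderOf σ = 2 := by rw [← Perm.lcm_cycleType, h22]; rfl
  have hsq : σ ^ 2 = 1 := by rw [← hord]; exact pow_orderOf_eq_one σ
  have hsq' : ∀ x : ZMod 5, (σ * σ) x = (m * m) * x + (m * b + b) := isAff_mul hf hf
  have key : ∀ x : ZMod 5, (m * m) * x + (m * b + b) = x := by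
    intro x
    rw [← hsq']
    have : σ * σ = 1 := by rw [← pow_two]; exact hsq
    rw [this]; rfl
  have h0 := key 0
  have h1 := key 1
  simp only [mul_zero, zero_add, mul_one] at h0 h1
  have hmm : m * m = 1 := by linear_combination h1 - h0
  have : m = 1 ∨ m = -1 := by
    have h : ∀ m : ZMod 5, m * m = 1 → m = 1 ∨ m = -1 := by decide
    exact h m hmm
  rcases this with h | h
  · exfalso
    subst h
    have hsupp : σ.support.card = 4 := by rw [← Perm.sum_cycleType, h22]; rfl
    have hne : σ.support ≠ Finset.univ := by
      intro hu; rw [hu] at hsupp; simp at hsupp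
    obtain ⟨x, hx⟩ : ∃ x : Fin 5, x ∉ σ.support := by
      by_contra hall
      push_neg at hall
      exact hne (Finset.eq_univ_iff_forall.mpr hall)
    have hfx : σ x = x := Perm.notMem_support.mp hx
    have hb : b = 0 := by
      have hx' := hf x
      rw [hfx] at hx'
      have h : ∀ u v : ZMod 5, u = 1 * u + v → v = 0 := by decide
      exact h _ _ hx'
    have hid : σ = 1 := by
      ext y
      have := hf y
      rw [hb] at this
      change σ y = (show Fin 5 from ((1 : ZMod 5) * (show ZMod 5 from y) + 0 : ZMod 5)) at this
      rw [one_mul, add_zero] at this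
      simp [this]
    rw [hid, Perm.cycleType_one] at h22
    exact absurd h22 (by decide)
  · exact h

lemma mult_list_prod (l : List (Perm (Fin 5))) (h : ∀ x ∈ l, x ∈ Aff5) :
    mult l.prod = (l.map mult).prod := by
  induction l with
  | nil => simpa using mult_one
  | cons x xs ih =>
    simp only [List.prod_cons, List.map_cons]
    rw [mult_mul' (h x (by simp)) (list_prod_mem (fun y hy => h y (List.mem_cons_of_mem _ hy))),
      ih (fun y hy => h y (List.mem_cons_of_mem _ hy))]

lemma comm_mem {σ τ : Perm (Fin 5)} (hσ : σ ∈ Aff5) (hτ : τ ∈ Aff5) : ⁅σ, τ⁆ ∈ Aff5 := by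
  rw [commutatorElement_def]
  exact mul_mem (mul_mem (mul_mem hσ hτ) (inv_mem hσ)) (inv_mem hτ)

/-- If `a i, b i, c j ∈ Aff(F₅)`, each `c j` has cycle type `{5}` or `{2,2}`, and
the number of `j` with `(c j)` of cycle type `{2,2}` is odd, then
`∏ ⁅a i, b i⁆ · ∏ c j ≠ 1`. -/
theorem no_generating_vector_in_Aff5_with_odd_number_of_double_transpositions
    (g n : ℕ) (a b : Fin g → Equiv.Perm (Fin 5)) (c : Fin n → Equiv.Perm (Fin 5))
    (ha : ∀ i, a i ∈ Aff5) (hb : ∀ i, b i ∈ Aff5) (hc : ∀ j, c j ∈ Aff5)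
    (htype : ∀ j, (c j).cycleType = {5} ∨ (c j).cycleType = {2, 2})
    (hodd : Odd (Finset.univ.filter fun j =>
      (c j).cycleType = ({2, 2} : Multiset ℕ)).card) :
    (List.ofFn fun i => ⁅a i, b i⁆).prod * (List.ofFn c).prod ≠ 1 := by
  intro hP
  have hmem1 : ∀ x ∈ (List.ofFn fun i => ⁅a i, b i⁆), x ∈ Aff5 := by
    intro x hx
    obtain ⟨i, rfl⟩ := List.mem_ofFn.mp hx
    exact comm_mem (ha i) (hb i)
  have hmem2 : ∀ x ∈ List.ofFn c, x ∈ Aff5 := by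
    intro x hx
    obtain ⟨j, rfl⟩ := List.mem_ofFn.mp hx
    exact hc j
  have hmult : mult ((List.ofFn fun i => ⁅a i, b i⁆).prod * (List.ofFn c).prod) = 1 := by
    rw [hP, mult_one]
  rw [mult_mul' (list_prod_mem hmem1) (list_prod_mem hmem2),
    mult_list_prod _ hmem1, mult_list_prod _ hmem2, List.map_ofFn, List.map_ofFn,
    List.prod_ofFn, List.prod_ofFn] at hmult
  have hcomm : ∀ i, (mult ∘ fun i => ⁅a i, b i⁆) i = 1 := fun i =>
    mult_comm_eq_one (ha i) (hb i)
  rw [Finset.prod_congr rfl (fun i _ => hcomm i), Finset.prod_const_one, one_mul] at hmult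
  have hcval : ∀ j, (mult ∘ c) j =
      if (c j).cycleType = ({2, 2} : Multiset ℕ) then (-1 : ZMod 5) else 1 := by
    intro j
    rcases htype j with h5 | h22
    · rw [if_neg (by rw [h5]; decide)]
      exact mult_of_five (hc j) h5
    · rw [if_pos h22]
      exact mult_of_22 (hc j) h22
  rw [Finset.prod_congr rfl (fun j _ => hcval j), Finset.prod_ite,
    Finset.prod_const, Finset.prod_const, one_pow, mul_one, Odd.neg_one_pow hodd] at hmult
  exact absurd hmult (by decide)
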